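/- arXiv:1708.03942 — 2 statements merged into one kernel-verified Lean document; each statement's English description precedes it below -/
import Mathlib

section
/- Theorem 4.2(ii) (finite-sample inference on increases and decreases): Assume the regression model with truth f càdlàg, and let f̂_n be a multiscale change-point segmentation estimator with constants c, δ, interval system 𝓘, and threshold η = η(β) chosen as the (1−β)-quantile of T_𝓘(ξ^n; 0), i.e. η(β) = inf{t : P(T_𝓘(ξ^n;0) ≤ t) ≥ 1−β}. For I ∈ 𝓘 set r_I = 2·(η(β) + s_I)/√(n|I|). Then with probability at least 1−β the following holds simultaneously over all pairs I_1, I_2 ∈ 𝓘 on each of which f̂_n is constant: if m_{I_1}(f̂_n) > m_{I_2}(f̂_n) + r_{I_1} + r_{I_2}, then m_{I_1}(f) > m_{I_2}(f). -/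
open MeasureTheory Filter Set ProbabilityTheory
open scoped ENNReal NNReal

noncomputable section

/-- A function `f : ℝ → ℝ` is càdlàg on `[0,1)`: right-continuous (within `[0,1)`) at every
point of `[0,1)`, and with left-sided limits (within `[0,1)`) at every point of `(0,1]`. -/
def Cadlag (f : ℝ → ℝ) : Prop :=
  (∀ x ∈ Set.Ico (0:ℝ) 1, ContinuousWithinAt f (Set.Ico x 1) x) ∧
  (∀ x ∈ Set.Ioc (0:ℝ) 1, ∃ l : ℝ, Filter.Tendsto f (nhdsWithin x (Set.Ico 0 x)) (nhds l))

/-- A right-continuous step function on `[0,1)` with finitely many jumps, together with its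
set of jump locations. The function is constant between consecutive jump points, and has a
genuine jump at each point of `jumps`. -/
structure StepFn where
  toFun : ℝ → ℝ
  jumps : Finset ℝ
  jumps_mem : ∀ τ ∈ jumps, τ ∈ Set.Ioo (0:ℝ) 1
  const_between : ∀ x ∈ Set.Ico (0:ℝ) 1, ∀ y ∈ Set.Ico (0:ℝ) 1, x ≤ y →
    (∀ τ ∈ jumps, τ ∉ Set.Ioc x y) → toFun x = toFun y
  jump_at : ∀ τ ∈ jumps, ∀ ε > 0, ∃ x ∈ Set.Ico (0:ℝ) 1,
    τ - ε < x ∧ x < τ ∧ toFun x ≠ toFun τ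

instance : CoeFun StepFn (fun _ => ℝ → ℝ) := ⟨StepFn.toFun⟩

/-- Number of change-points `#J(f)` of a step function. -/
def StepFn.card (f : StepFn) : ℕ := f.jumps.card

/-- The `L^p([0,1))` (quasi-)norm, `p ∈ (0,∞]`, as a real number. -/
def LpNorm (p : ℝ≥0∞) (f : ℝ → ℝ) : ℝ :=
  (eLpNorm f p (volume.restrict (Set.Ico (0:ℝ) 1))).toReal

/-- The class `S_L(k)` of step functions with at most `k` jumps, uniformly bounded by `L`. -/
def SL (L : ℝ) (k : ℕ) : Set StepFn :=
  {f | f.card ≤ k ∧ ∀ x ∈ Set.Ico (0:ℝ) 1, |f.toFun x| ≤ L}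

/-- Approximation error `Δ_{q,k}(f)`: distance in `L^q([0,1))` from `f` to step functions
with at most `k` jumps. -/
def ApproxErr (q : ℝ≥0∞) (k : ℕ) (f : ℝ → ℝ) : ℝ :=
  sInf {v | ∃ g : StepFn, g.card ≤ k ∧ v = LpNorm q (fun x => f x - g.toFun x)}

/-- The approximation class `A^γ_{q,L}`. -/
def ApproxClass (γ : ℝ) (q : ℝ≥0∞) (L : ℝ) : Set (ℝ → ℝ) :=
  {f | Cadlag f ∧ (∀ k : ℕ, 1 ≤ k → (k : ℝ) ^ γ * ApproxErr q k f ≤ L) ∧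
    ∀ x ∈ Set.Ico (0:ℝ) 1, |f x| ≤ L}

/-- Intervals `[a,b)` are encoded as pairs `(a,b)`. An interval has its endpoints on the
grid `{i/n : i = 0,…,n}` and is nonempty. -/
def OnGrid (n : ℕ) (I : ℝ × ℝ) : Prop :=
  (∃ i : ℕ, i ≤ n ∧ I.1 = (i : ℝ) / n) ∧ (∃ i : ℕ, i ≤ n ∧ I.2 = (i : ℝ) / n) ∧ I.1 < I.2

/-- `c`-normal system of intervals (Definition 2.1). -/
def IsNormal (c : ℝ) (n : ℕ) (𝓘 : Set (ℝ × ℝ)) : Prop :=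
  (∀ a b : ℝ, 0 ≤ a → a < b → b ≤ 1 → c / n < b - a →
    ∃ I ∈ 𝓘, a ≤ I.1 ∧ I.2 ≤ b ∧ (b - a) / c ≤ I.2 - I.1) ∧
  (∀ I ∈ 𝓘, OnGrid n I) ∧
  (∀ i : ℕ, i < n → ((i : ℝ) / n, ((i : ℝ) + 1) / n) ∈ 𝓘)

/-- `f` is constant on the interval `[I.1, I.2)` (with value `f I.1`). -/
def ConstOn (f : ℝ → ℝ) (I : ℝ × ℝ) : Prop :=
  ∀ x ∈ Set.Ico I.1 I.2, f x = f I.1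

/-- The local statistic `(n|I|)^{-1/2} |Σ_{i/n ∈ I} (y_i - c_I)|`. -/
def localStat (n : ℕ) (y : Fin n → ℝ) (I : ℝ × ℝ) (cI : ℝ) : ℝ :=
  ((n : ℝ) * (I.2 - I.1)) ^ (-(1/2) : ℝ) *
    |∑ i : Fin n, if (i : ℝ) / n ∈ Set.Ico I.1 I.2 then y i - cI else 0|

/-- The multiscale statistic `T_𝓘(y; f)` (with values in `EReal`; it is `⊥` if `f` is
constant on no interval of `𝓘`). -/
def mstat (n : ℕ) (𝓘 : Set (ℝ × ℝ)) (s : ℝ × ℝ → ℝ) (y : Fin n → ℝ) (f : ℝ → ℝ) : EReal :=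
  sSup {v : EReal | ∃ I ∈ 𝓘, ConstOn f I ∧ v = ((localStat n y I (f I.1) - s I : ℝ) : EReal)}

/-- `fh` is a solution of the multiscale change-point segmentation problem (2.2):
it satisfies the multiscale constraint and minimizes the number of jumps among all step
functions satisfying the constraint. -/
def IsMCPSolution (n : ℕ) (𝓘 : Set (ℝ × ℝ)) (s : ℝ × ℝ → ℝ) (η : ℝ) (y : Fin n → ℝ)
    (fh : StepFn) : Prop :=
  mstat n 𝓘 s y fh.toFun ≤ (η : EReal) ∧
  ∀ g : StepFn, mstat n 𝓘 s y g.toFun ≤ (η : EReal) → fh.card ≤ g.card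

/-- Local average `f̄_i^n = n ∫_{[i/n,(i+1)/n)} f`. -/
def fbar (n : ℕ) (f : ℝ → ℝ) (i : Fin n) : ℝ :=
  n * ∫ x in Set.Ico ((i : ℝ) / n) (((i : ℝ) + 1) / n), f x

/-- The observations `y_i^n = f̄_i^n + ξ_i^n(ω)`. -/
def dataOf {Ω : Type*} (n : ℕ) (f : ℝ → ℝ) (ξ : Fin n → Ω → ℝ) (ω : Ω) : Fin n → ℝ :=
  fun i => fbar n f i + ξ i ω

/-- Local mean `m_I(f) = |I|⁻¹ ∫_I f`. -/
def localMean (I : ℝ × ℝ) (f : ℝ → ℝ) : ℝ :=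
  (I.2 - I.1)⁻¹ * ∫ x in Set.Ico I.1 I.2, f x

end

noncomputable section

/-- The threshold `η(β)`: the `(1-β)`-quantile of the null multiscale statistic
`T_𝓘(ξ^n; 0)`. -/
def quantileEta {Ω : Type} [MeasurableSpace Ω] (P : Measure Ω) (n : ℕ) (𝓘 : Set (ℝ × ℝ))
    (s : Ω → ℝ × ℝ → ℝ) (ξ : Fin n → Ω → ℝ) (β : ℝ) : ℝ :=
  sInf {t : ℝ | ENNReal.ofReal (1 - β) ≤
    P {ω | mstat n 𝓘 (s ω) (fun i => ξ i ω) (fun _ => 0) ≤ (t : EReal)}}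

end


section AuxLemmas

open MeasureTheory

private lemma aux_cond_iff (n : ℕ) (hn : 0 < n) (j k m : ℕ) :
    ((m:ℝ)/n ∈ Set.Ico ((j:ℝ)/n) ((k:ℝ)/n)) ↔ (j ≤ m ∧ m < k) := by
  have hn' : (0:ℝ) < n := by exact_mod_cast hn
  rw [Set.mem_Ico, div_le_div_iff_of_pos_right hn', div_lt_div_iff_of_pos_right hn']
  constructor
  · rintro ⟨h1, h2⟩; exact ⟨by exact_mod_cast h1, by exact_mod_cast h2⟩
  · rintro ⟨h1, h2⟩; exact ⟨by exact_mod_cast h1, by exact_mod_cast h2⟩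

private lemma aux_sum_ite (n j k : ℕ) (hn : 0 < n) (hk : k ≤ n) (F : ℕ → ℝ) :
    (∑ i : Fin n, if ((i:ℕ):ℝ)/n ∈ Set.Ico ((j:ℝ)/n) ((k:ℝ)/n) then F (i:ℕ) else 0)
      = ∑ i ∈ Finset.Ico j k, F i := by
  classical
  rw [Fin.sum_univ_eq_sum_range
    (fun m => if ((m:ℕ):ℝ)/n ∈ Set.Ico ((j:ℝ)/n) ((k:ℝ)/n) then F m else 0) n]
  rw [Finset.sum_congr rfl (fun i _ => if_congr (aux_cond_iff n hn j k i) rfl rfl)]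
  rw [Finset.sum_congr rfl (fun i _ => if_congr Finset.mem_Ico.symm rfl rfl)]
  rw [Finset.sum_ite_mem]
  congr 1
  rw [Finset.inter_eq_right]
  intro i hi
  rw [Finset.mem_Ico] at hi
  rw [Finset.mem_range]
  omega

private lemma aux_sum_fbar (n : ℕ) (hn : 0 < n) (f : ℝ → ℝ)
    (hfint : IntegrableOn f (Set.Ico (0:ℝ) 1)) (j : ℕ) :
    ∀ k, j ≤ k → k ≤ n →
    (∑ i ∈ Finset.Ico j k, ∫ x in Set.Ico ((i:ℝ)/n) (((i:ℝ)+1)/n), f x)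
      = ∫ x in Set.Ico ((j:ℝ)/n) ((k:ℝ)/n), f x := by
  intro k
  induction k with
  | zero =>
    intro hjk _
    have hj0 : j = 0 := Nat.le_zero.mp hjk
    subst hj0; simp
  | succ k ih =>
    intro hjk hk
    rcases Nat.eq_or_lt_of_le hjk with h | h
    · rw [← h]; simp
    · have hjk' : j ≤ k := Nat.lt_succ_iff.mp h
      have hkn : k ≤ n := Nat.le_of_succ_le hk
      have hn' : (0:ℝ) < n := by exact_mod_cast hn
      have hjknR : (j:ℝ)/n ≤ (k:ℝ)/n := by
        rw [div_le_div_iff_of_pos_right hn']; exact_mod_cast hjk'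
      have h2 : (k:ℝ)/n ≤ ((k:ℝ)+1)/n := by
        rw [div_le_div_iff_of_pos_right hn']; linarith
      have hsub1 : Set.Ico ((j:ℝ)/n) ((k:ℝ)/n) ⊆ Set.Ico (0:ℝ) 1 :=
        Set.Ico_subset_Ico (by positivity) (by rw [div_le_one hn']; exact_mod_cast hkn)
      have hsub2 : Set.Ico ((k:ℝ)/n) (((k:ℝ)+1)/n) ⊆ Set.Ico (0:ℝ) 1 :=
        Set.Ico_subset_Ico (by positivity)
          (by rw [div_le_one hn']; exact_mod_cast hk)
      rw [Finset.sum_Ico_succ_top hjk', ih hjk' hkn]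
      push_cast
      rw [← Set.Ico_union_Ico_eq_Ico hjknR h2,
          setIntegral_union Set.Ico_disjoint_Ico_same measurableSet_Ico
            (hfint.mono_set hsub1) (hfint.mono_set hsub2)]

private lemma aux_key (n : ℕ) (hn : 0 < n) (f : ℝ → ℝ)
    (hfint : IntegrableOn f (Set.Ico (0:ℝ) 1))
    (g : ℝ → ℝ) (ξv : Fin n → ℝ) (I : ℝ × ℝ) (hgrid : OnGrid n I)
    (hconst : ConstOn g I) (e : ℝ)
    (h1 : localStat n (fun i => fbar n f i + ξv i) I (g I.1) ≤ e)
    (h2 : localStat n ξv I 0 ≤ e) :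
    |localMean I g - localMean I f| ≤ 2 * e / Real.sqrt ((n:ℝ) * (I.2 - I.1)) := by
  classical
  obtain ⟨⟨j, hj, ha⟩, ⟨k, hk, hb⟩, hab⟩ := hgrid
  have hn' : (0:ℝ) < n := by exact_mod_cast hn
  have hjkR : (j:ℝ)/n < (k:ℝ)/n := by rw [← ha, ← hb]; exact hab
  have hjk : j < k := by
    have := (div_lt_div_iff_of_pos_right hn').mp hjkR
    exact_mod_cast this
  set cI := g I.1 with hcI
  set M : ℝ := (k:ℝ) - (j:ℝ) with hMdef
  have hMpos : 0 < M := by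
    have : (j:ℝ) < (k:ℝ) := by exact_mod_cast hjk
    simp only [hMdef]; linarith
  have hM : (n:ℝ) * (I.2 - I.1) = M := by
    rw [ha, hb, hMdef]; field_simp
  set sq := Real.sqrt M with hsqdef
  have hsq : 0 < sq := Real.sqrt_pos.mpr hMpos
  have hrpow : ((n:ℝ) * (I.2 - I.1)) ^ (-(1/2) : ℝ) = sq⁻¹ := by
    rw [hM, Real.rpow_neg hMpos.le, hsqdef, Real.sqrt_eq_rpow]
  -- bounds on the two sums
  set Sy := ∑ i : Fin n, (if ((i:ℕ):ℝ)/n ∈ Set.Ico I.1 I.2 then (fbar n f i + ξv i) - cI else 0)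
    with hSydef
  set Sξ := ∑ i : Fin n, (if ((i:ℕ):ℝ)/n ∈ Set.Ico I.1 I.2 then ξv i - 0 else 0) with hSξdef
  have hSy : |Sy| ≤ e * sq := by
    have h1' : sq⁻¹ * |Sy| ≤ e := by
      rw [localStat, hrpow] at h1; exact h1
    calc |Sy| = sq * (sq⁻¹ * |Sy|) := by field_simp
    _ ≤ sq * e := mul_le_mul_of_nonneg_left h1' hsq.le
    _ = e * sq := mul_comm _ _
  have hSξ : |Sξ| ≤ e * sq := by
    have h2' : sq⁻¹ * |Sξ| ≤ e := by
      rw [localStat, hrpow] at h2; exact h2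
    calc |Sξ| = sq * (sq⁻¹ * |Sξ|) := by field_simp
    _ ≤ sq * e := mul_le_mul_of_nonneg_left h2' hsq.le
    _ = e * sq := mul_comm _ _
  -- the deterministic sum
  have hSd : Sy - Sξ = (n:ℝ) * (∫ x in Set.Ico I.1 I.2, f x) - M * cI := by
    rw [hSydef, hSξdef, ← Finset.sum_sub_distrib]
    have hterm : ∀ i : Fin n,
        ((if ((i:ℕ):ℝ)/n ∈ Set.Ico I.1 I.2 then (fbar n f i + ξv i) - cI else 0) -
          (if ((i:ℕ):ℝ)/n ∈ Set.Ico I.1 I.2 then ξv i - 0 else 0))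
        = (if ((i:ℕ):ℝ)/n ∈ Set.Ico I.1 I.2 then fbar n f i - cI else 0) := by
      intro i; split_ifs <;> ring
    rw [Finset.sum_congr rfl (fun i _ => hterm i)]
    have hIco : Set.Ico I.1 I.2 = Set.Ico ((j:ℝ)/n) ((k:ℝ)/n) := by rw [ha, hb]
    have hfb : ∀ i : Fin n, fbar n f i
        = (fun m : ℕ => (n:ℝ) * ∫ x in Set.Ico ((m:ℝ)/n) (((m:ℝ)+1)/n), f x) (i:ℕ) := by
      intro i; rfl
    calc (∑ i : Fin n, if ((i:ℕ):ℝ)/n ∈ Set.Ico I.1 I.2 then fbar n f i - cI else 0)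
        = ∑ i : Fin n, if ((i:ℕ):ℝ)/n ∈ Set.Ico ((j:ℝ)/n) ((k:ℝ)/n) then
            (fun m : ℕ => (n:ℝ) * (∫ x in Set.Ico ((m:ℝ)/n) (((m:ℝ)+1)/n), f x) - cI) (i:ℕ)
          else 0 := by
          apply Finset.sum_congr rfl
          intro i _
          simp only [hIco, fbar]
    _ = ∑ i ∈ Finset.Ico j k, ((n:ℝ) * (∫ x in Set.Ico ((i:ℝ)/n) (((i:ℝ)+1)/n), f x) - cI) :=
          aux_sum_ite n j k hn hk (fun m : ℕ => (n:ℝ) * (∫ x in Set.Ico ((m:ℝ)/n) (((m:ℝ)+1)/n), f x) - cI)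
    _ = (n:ℝ) * (∑ i ∈ Finset.Ico j k, ∫ x in Set.Ico ((i:ℝ)/n) (((i:ℝ)+1)/n), f x)
          - ((Finset.Ico j k).card : ℝ) * cI := by
          rw [Finset.sum_sub_distrib, Finset.mul_sum, Finset.sum_const, nsmul_eq_mul]
    _ = (n:ℝ) * (∫ x in Set.Ico I.1 I.2, f x) - M * cI := by
          rw [aux_sum_fbar n hn f hfint j k hjk.le hk, Nat.card_Ico, ← hIco, hMdef]
          congr 2
          exact_mod_cast Nat.cast_sub hjk.le
  -- local means
  have hablt : I.1 < I.2 := hab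
  have hmg : localMean I g = cI := by
    rw [localMean, setIntegral_congr_fun measurableSet_Ico hconst, setIntegral_const]
    rw [measureReal_def, Real.volume_Ico, ENNReal.toReal_ofReal (by linarith : (0:ℝ) ≤ I.2 - I.1), smul_eq_mul]
    rw [← mul_assoc, inv_mul_cancel₀ (by linarith : I.2 - I.1 ≠ 0), one_mul]
  have hne : I.2 - I.1 ≠ 0 := by linarith
  have hintf : (n:ℝ) * (∫ x in Set.Ico I.1 I.2, f x) = M * localMean I f := by
    rw [localMean, ← hM]; field_simp [hne]
  -- combine
  have habs : |Sy - Sξ| ≤ 2 * e * sq := by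
    calc |Sy - Sξ| ≤ |Sy| + |Sξ| := abs_sub _ _
    _ ≤ e * sq + e * sq := add_le_add hSy hSξ
    _ = 2 * e * sq := by ring
  rw [hSd, hintf] at habs
  have hfinal : |localMean I g - localMean I f| * sq ≤ 2 * e := by
    have hMsq : sq * sq = M := Real.mul_self_sqrt hMpos.le
    have heq : |M * localMean I f - M * cI| = M * |localMean I g - localMean I f| := by
      rw [hmg]
      have h1 : M * localMean I f - M * cI = -(M * (cI - localMean I f)) := by ring
      rw [h1, abs_neg, abs_mul, abs_of_pos hMpos]
    rw [heq] at habs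
    nlinarith [abs_nonneg (localMean I g - localMean I f), habs, hMsq, hsq,
      mul_pos hsq hsq]
  rw [hM, ← hsqdef, le_div_iff₀ hsq]
  exact hfinal

end AuxLemmas

/-- **Theorem 4.2(ii) (finite-sample inference on increases and decreases).**
With the quantile threshold `η(β)`, with probability at least `1-β`, simultaneously over all
pairs `I₁, I₂ ∈ 𝓘` on which `f̂_n` is constant:
`m_{I₁}(f̂_n) > m_{I₂}(f̂_n) + r_{I₁} + r_{I₂}` implies `m_{I₁}(f) > m_{I₂}(f)`,
where `r_I = 2 (η(β) + s_I)/√(n|I|)`. -/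
theorem finite_sample_shape_inference
    {Ω : Type} [MeasurableSpace Ω] (P : Measure Ω) [IsProbabilityMeasure P]
    (σ : ℝ) (hσ : 0 < σ)
    (n : ℕ) (hn : 1 ≤ n)
    (ξ : Fin n → Ω → ℝ)
    (hmeas : ∀ i, Measurable (ξ i))
    (hindep : iIndepFun ξ P)
    (hcent : ∀ i, ∫ ω, ξ i ω ∂P = 0)
    (hintξ : ∀ i, Integrable (ξ i) P)
    (hsub : ∀ (i : Fin n) (u : ℝ),
      ∫⁻ ω, ENNReal.ofReal (Real.exp (u * ξ i ω)) ∂P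
        ≤ ENNReal.ofReal (Real.exp (u ^ 2 * σ ^ 2 / 2)))
    (f : ℝ → ℝ) (hfcad : Cadlag f) (hfint : IntegrableOn f (Set.Ico (0:ℝ) 1))
    (c δ : ℝ) (hc : 1 < c) (hδ : 0 < δ)
    (𝓘 : Set (ℝ × ℝ)) (h𝓘 : IsNormal c n 𝓘)
    (s : Ω → ℝ × ℝ → ℝ)
    (hsmeas : ∀ I, Measurable (fun ω => s ω I))
    (hs : ∀ᵐ ω ∂P, ∀ I ∈ 𝓘, |s ω I| ≤ δ * Real.sqrt (Real.log n))
    (β : ℝ) (hβ : 0 < β) (hβ1 : β < 1)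
    (fhat : Ω → StepFn)
    (hfhat : ∀ ω : Ω,
      IsMCPSolution n 𝓘 (s ω) (quantileEta P n 𝓘 s ξ β)
        (dataOf n f ξ ω) (fhat ω)) :
    ENNReal.ofReal (1 - β) ≤
      P {ω | ∀ I₁ ∈ 𝓘, ∀ I₂ ∈ 𝓘,
        ConstOn (fhat ω).toFun I₁ → ConstOn (fhat ω).toFun I₂ →
        localMean I₂ (fhat ω).toFun
            + 2 * (quantileEta P n 𝓘 s ξ β + s ω I₁) / Real.sqrt (n * (I₁.2 - I₁.1))
            + 2 * (quantileEta P n 𝓘 s ξ β + s ω I₂) / Real.sqrt (n * (I₂.2 - I₂.1))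
          < localMean I₁ (fhat ω).toFun →
        localMean I₂ f < localMean I₁ f} := by
  classical
  have hn0 : 0 < n := hn
  set η := quantileEta P n 𝓘 s ξ β with hηdef
  -- the statistic as a family of real random variables
  set G : (ℝ × ℝ) → Ω → ℝ :=
    fun I ω => localStat n (fun i => ξ i ω) I 0 - s ω I with hGdef
  set A : ℝ → Set Ω := fun t => {ω | ∀ I ∈ 𝓘, G I ω ≤ t} with hAdef
  -- the multiscale statistic is ≤ t iff all local statistics are ≤ t
  have hAiff : ∀ (ω : Ω) (t : ℝ),
      mstat n 𝓘 (s ω) (fun i => ξ i ω) (fun _ => 0) ≤ (t : EReal) ↔ ω ∈ A t := by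
    intro ω t
    rw [mstat, sSup_le_iff]
    constructor
    · intro h I hI
      have := h _ ⟨I, hI, fun x _ => rfl, rfl⟩
      exact_mod_cast this
    · rintro h v ⟨I, hI, -, rfl⟩
      exact_mod_cast h I hI
  -- finiteness of the interval system
  have h𝓘fin : 𝓘.Finite := by
    have hsub : 𝓘 ⊆ ((fun i : ℕ => (i:ℝ)/n) '' Set.Iic n) ×ˢ
        ((fun i : ℕ => (i:ℝ)/n) '' Set.Iic n) := by
      intro I hI
      obtain ⟨⟨i1, hi1, h1⟩, ⟨i2, hi2, h2⟩, -⟩ := h𝓘.2.1 I hI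
      exact ⟨⟨i1, hi1, h1.symm⟩, ⟨i2, hi2, h2.symm⟩⟩
    exact (((Set.finite_Iic n).image _).prod ((Set.finite_Iic n).image _)).subset hsub
  -- measurability
  have hGmeas : ∀ I : ℝ × ℝ, Measurable (G I) := by
    intro I
    apply Measurable.sub _ (hsmeas I)
    apply Measurable.const_mul
    apply Measurable.abs
    apply Finset.measurable_sum
    intro i _
    by_cases hc : ((i:ℕ):ℝ)/n ∈ Set.Ico I.1 I.2
    · simpa [hc] using hmeas i
    · simpa [hc] using measurable_const (α := Ω) (a := (0:ℝ))
  have hAmeas : ∀ t : ℝ, MeasurableSet (A t) := by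
    intro t
    have : A t = ⋂ I ∈ 𝓘, {ω | G I ω ≤ t} := by
      ext ω; simp [hAdef, Set.mem_iInter]
    rw [this]
    exact MeasurableSet.biInter h𝓘fin.countable
      (fun I _ => measurableSet_le (hGmeas I) measurable_const)
  -- monotonicity of the events
  have hmono : ∀ {t t' : ℝ}, t ≤ t' → A t ⊆ A t' :=
    fun h ω hω I hI => (hω I hI).trans h
  -- the quantile set
  set S : Set ℝ := {t | ENNReal.ofReal (1 - β) ≤ P (A t)} with hSdef
  have hηS : η = sInf S := by
    rw [hηdef, quantileEta]
    congr 1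
    ext t
    have : {ω | mstat n 𝓘 (s ω) (fun i => ξ i ω) (fun _ => 0) ≤ (t : EReal)} = A t :=
      Set.ext fun ω => hAiff ω t
    rw [hSdef]
    simp only [Set.mem_setOf_eq, this]
  have hup : ∀ {t t' : ℝ}, t ∈ S → t ≤ t' → t' ∈ S :=
    fun ht h => le_trans ht (measure_mono (hmono h))
  -- S is nonempty
  have hmonoA : Monotone (fun m : ℕ => A (m:ℝ)) :=
    fun a b hab => hmono (by exact_mod_cast hab)
  have hUnion : (⋃ m : ℕ, A (m:ℝ)) = Set.univ := by
    ext ω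
    simp only [Set.mem_iUnion, Set.mem_univ, iff_true]
    obtain ⟨b, hb⟩ := (h𝓘fin.image (fun I => G I ω)).bddAbove
    obtain ⟨m, hm⟩ := exists_nat_ge b
    exact ⟨m, fun I hI => le_trans (hb ⟨I, hI, rfl⟩) hm⟩
  have hlt1 : ENNReal.ofReal (1 - β) < 1 := ENNReal.ofReal_lt_one.mpr (by linarith)
  have hSne : S.Nonempty := by
    have hsup : P (⋃ m : ℕ, A (m:ℝ)) = ⨆ m : ℕ, P (A (m:ℝ)) :=
      hmonoA.directed_le.measure_iUnion
    have : ENNReal.ofReal (1 - β) < ⨆ m : ℕ, P (A (m:ℝ)) := by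
      rw [← hsup, hUnion, measure_univ]; exact hlt1
    obtain ⟨m, hm⟩ := lt_iSup_iff.mp this
    exact ⟨(m:ℝ), hm.le⟩
  -- the quantile is attained
  have hηmem : ENNReal.ofReal (1 - β) ≤ P (A η) := by
    by_cases hbdd : BddBelow S
    · have hmem : ∀ m : ℕ, η + 1/((m:ℝ)+1) ∈ S := by
        intro m
        have hpos : sInf S < η + 1/((m:ℝ)+1) := by
          rw [← hηS]; have : (0:ℝ) < 1/((m:ℝ)+1) := by positivity
          linarith
        obtain ⟨t, htS, htlt⟩ := (csInf_lt_iff hbdd hSne).mp hpos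
        exact hup htS htlt.le
      have hiInter : A η = ⋂ m : ℕ, A (η + 1/((m:ℝ)+1)) := by
        ext ω
        simp only [Set.mem_iInter]
        constructor
        · intro h m
          exact hmono (by nlinarith [one_div_pos.mpr (by positivity : (0:ℝ) < (m:ℝ)+1)]) h
        · intro h I hI
          apply le_of_forall_pos_le_add
          intro ε hε
          obtain ⟨m, hm⟩ := exists_nat_one_div_lt hε
          exact (h m I hI).trans (by linarith)
      have hanti : Antitone (fun m : ℕ => A (η + 1/((m:ℝ)+1))) := by
        intro a b hab
        apply hmono
        have hba : (a:ℝ) ≤ (b:ℝ) := by exact_mod_cast hab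
        have : (1:ℝ)/((b:ℝ)+1) ≤ 1/((a:ℝ)+1) :=
          one_div_le_one_div_of_le (by positivity) (by linarith)
        linarith
      have htend := tendsto_measure_iInter_atTop
        (fun m : ℕ => (hAmeas (η + 1/((m:ℝ)+1))).nullMeasurableSet) hanti
        ⟨0, measure_ne_top P _⟩
      rw [hiInter]
      exact ge_of_tendsto htend (Filter.Eventually.of_forall fun m => hmem m)
    · obtain ⟨t, htS, htlt⟩ := not_bddBelow_iff.mp hbdd η
      exact hup htS htlt.le
  -- the event implies the conclusion
  refine le_trans hηmem (measure_mono ?_)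
  intro ω hω
  intro I₁ hI₁ I₂ hI₂ hc₁ hc₂ hltm
  have hbound : ∀ I ∈ 𝓘, ConstOn (fhat ω).toFun I →
      |localMean I (fhat ω).toFun - localMean I f|
        ≤ 2 * (η + s ω I) / Real.sqrt ((n:ℝ) * (I.2 - I.1)) := by
    intro I hI hc
    have h1 : localStat n (dataOf n f ξ ω) I ((fhat ω).toFun I.1) ≤ η + s ω I := by
      have hle : ((localStat n (dataOf n f ξ ω) I ((fhat ω).toFun I.1) - s ω I : ℝ) : EReal)
          ≤ mstat n 𝓘 (s ω) (dataOf n f ξ ω) (fhat ω).toFun :=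
        le_sSup ⟨I, hI, hc, rfl⟩
      have := hle.trans (hfhat ω).1
      have hre : localStat n (dataOf n f ξ ω) I ((fhat ω).toFun I.1) - s ω I ≤ η := by
        exact_mod_cast this
      linarith
    have h2 : localStat n (fun i => ξ i ω) I 0 ≤ η + s ω I := by
      have h : localStat n (fun i => ξ i ω) I 0 - s ω I ≤ η := hω I hI
      linarith
    exact aux_key n hn0 f hfint (fhat ω).toFun (fun i => ξ i ω) I (h𝓘.2.1 I hI) hc
      (η + s ω I) (by exact h1) h2
  have hb1 := hbound I₁ hI₁ hc₁
  have hb2 := hbound I₂ hI₂ hc₂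
  obtain ⟨hb1l, hb1r⟩ := abs_le.mp hb1
  obtain ⟨hb2l, hb2r⟩ := abs_le.mp hb2
  linarith
end

section
/- Deterministic good-noise estimate on common constancy intervals (key step in the proof of Theorem 3.1): Let n ≥ 2, let 𝓘 be a c-normal system of intervals with deterministic scale penalties satisfying sup_{I∈𝓘}|s_I| ≤ δ·√(log n), and let y ∈ ℝ^n. Suppose f, g ∈ S both satisfy the multiscale constraint T_𝓘(y; f) ≤ a·√(log n) and T_𝓘(y; g) ≤ a·√(log n) for some a > 0. Let I ⊆ [0,1) be an interval with |I| > c/n on which f is constant with value θ_f and g is constant with value θ_g. Then |θ_f − θ_g| ≤ 2·(a+δ)·√( c·log n/(n·|I|) ). -/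
open MeasureTheory Filter Set ProbabilityTheory
open scoped ENNReal NNReal

/-- **Deterministic good-noise estimate on common constancy intervals**
(key step in the proof of Theorem 3.1). If two step functions `f, g` both satisfy the
multiscale constraint at level `a √(log n)` over a `c`-normal system and are constant, with
values `θ_f, θ_g`, on a common interval `[α, β)` with `β - α > c/n`, then
`|θ_f - θ_g| ≤ 2 (a + δ) √(c log n / (n (β - α)))`. -/
theorem good_noise_constancy_estimate
    (n : ℕ) (hn : 2 ≤ n)
    (c δ : ℝ) (hc : 1 < c) (hδ : 0 < δ)
    (𝓘 : Set (ℝ × ℝ)) (h𝓘 : IsNormal c n 𝓘)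
    (s : ℝ × ℝ → ℝ) (hs : ∀ I ∈ 𝓘, |s I| ≤ δ * Real.sqrt (Real.log n))
    (y : Fin n → ℝ)
    (a : ℝ) (ha : 0 < a)
    (f g : StepFn)
    (hf : mstat n 𝓘 s y f.toFun ≤ ((a * Real.sqrt (Real.log n) : ℝ) : EReal))
    (hg : mstat n 𝓘 s y g.toFun ≤ ((a * Real.sqrt (Real.log n) : ℝ) : EReal))
    (α β : ℝ) (hα : 0 ≤ α) (hβ : β ≤ 1) (hlen : c / n < β - α)
    (θf θg : ℝ)
    (hfconst : ∀ x ∈ Set.Ico α β, f.toFun x = θf)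
    (hgconst : ∀ x ∈ Set.Ico α β, g.toFun x = θg) :
    |θf - θg| ≤ 2 * (a + δ) * Real.sqrt (c * Real.log n / (n * (β - α))) := by
  have hn0 : (0:ℝ) < n := by
    have : 0 < n := by omega
    exact_mod_cast this
  have hc0 : (0:ℝ) < c := lt_trans one_pos hc
  have hαβ : α < β := by nlinarith [div_pos hc0 hn0]
  -- extract the normal interval
  obtain ⟨I, hI𝓘, hIα, hIβ, hIlen⟩ := h𝓘.1 α β hα hαβ hβ hlen
  obtain ⟨⟨i₀, hi₀n, hI1⟩, ⟨j, hjn, hI2⟩, hI12⟩ := h𝓘.2.1 I hI𝓘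
  have hij : i₀ < j := by
    rw [hI1, hI2, div_lt_div_iff_of_pos_right hn0] at hI12
    exact_mod_cast hI12
  have hsub : Set.Ico I.1 I.2 ⊆ Set.Ico α β := Set.Ico_subset_Ico hIα hIβ
  have hI1mem : I.1 ∈ Set.Ico α β := ⟨hIα, lt_of_lt_of_le hI12 hIβ⟩
  set L : ℝ := Real.log n with hL
  have hL0 : 0 ≤ L := Real.log_nonneg (by exact_mod_cast (by omega : 1 ≤ n))
  set K : ℝ := (n : ℝ) * (I.2 - I.1) with hKdef
  have hKval : K = (j : ℝ) - (i₀ : ℝ) := by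
    rw [hKdef, hI1, hI2]; field_simp
  have hKpos : 0 < K := by
    rw [hKval]
    have : (i₀ : ℝ) < j := by exact_mod_cast hij
    linarith
  have hsqrtK : 0 < Real.sqrt K := Real.sqrt_pos.2 hKpos
  -- key bound for both f and g
  have key : ∀ (φ : ℝ → ℝ) (θ : ℝ),
      mstat n 𝓘 s y φ ≤ ((a * Real.sqrt L : ℝ) : EReal) →
      (∀ x ∈ Set.Ico α β, φ x = θ) →
      |∑ i : Fin n, if (i : ℝ) / n ∈ Set.Ico I.1 I.2 then y i - θ else 0|
        ≤ Real.sqrt K * ((a + δ) * Real.sqrt L) := by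
    intro φ θ hφ hconst
    have hconstI : ConstOn φ I := by
      intro x hx
      rw [hconst x (hsub hx), hconst I.1 hI1mem]
    have hmem : ((localStat n y I (φ I.1) - s I : ℝ) : EReal) ∈
        {v : EReal | ∃ J ∈ 𝓘, ConstOn φ J ∧
          v = ((localStat n y J (φ J.1) - s J : ℝ) : EReal)} :=
      ⟨I, hI𝓘, hconstI, rfl⟩
    have h1 : ((localStat n y I (φ I.1) - s I : ℝ) : EReal)
        ≤ ((a * Real.sqrt L : ℝ) : EReal) := le_trans (le_sSup hmem) hφ
    have h2 : localStat n y I (φ I.1) - s I ≤ a * Real.sqrt L := by exact_mod_cast h1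
    have h3 := abs_le.1 (hs I hI𝓘)
    have h4 : localStat n y I θ ≤ (a + δ) * Real.sqrt L := by
      rw [← hconst I.1 hI1mem]; nlinarith [h3.2, h2]
    have h5 : localStat n y I θ
        = (Real.sqrt K)⁻¹ *
          |∑ i : Fin n, if (i : ℝ) / n ∈ Set.Ico I.1 I.2 then y i - θ else 0| := by
      unfold localStat
      rw [← hKdef, Real.rpow_neg hKpos.le, ← Real.sqrt_eq_rpow]
    rw [h5] at h4
    have h6 := mul_le_mul_of_nonneg_left h4 hsqrtK.le
    rwa [← mul_assoc, mul_inv_cancel₀ hsqrtK.ne', one_mul] at h6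
  have hkf := key f.toFun θf hf hfconst
  have hkg := key g.toFun θg hg hgconst
  -- count of grid points in I
  have hiff : ∀ i : Fin n, ((i : ℝ) / n ∈ Set.Ico I.1 I.2) ↔ (i₀ ≤ (i : ℕ) ∧ (i : ℕ) < j) := by
    intro i
    rw [hI1, hI2, Set.mem_Ico, div_le_div_iff_of_pos_right hn0,
      div_lt_div_iff_of_pos_right hn0]
    constructor
    · rintro ⟨h1, h2⟩; exact ⟨by exact_mod_cast h1, by exact_mod_cast h2⟩
    · rintro ⟨h1, h2⟩; exact ⟨by exact_mod_cast h1, by exact_mod_cast h2⟩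
  have hcount : ∑ i : Fin n, (if (i : ℝ) / n ∈ Set.Ico I.1 I.2 then (1:ℝ) else 0) = K := by
    have : ∀ i : Fin n, (if (i : ℝ) / n ∈ Set.Ico I.1 I.2 then (1:ℝ) else 0)
        = (if i₀ ≤ (i : ℕ) ∧ (i : ℕ) < j then (1:ℝ) else 0) := by
      intro i; simp only [hiff i]
    rw [Finset.sum_congr rfl (fun i _ => this i),
      Fin.sum_univ_eq_sum_range (fun i => if i₀ ≤ i ∧ i < j then (1:ℝ) else 0) n,
      Finset.sum_boole]
    have hfil : (Finset.range n).filter (fun i => i₀ ≤ i ∧ i < j) = Finset.Ico i₀ j := by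
      ext i
      simp only [Finset.mem_filter, Finset.mem_range, Finset.mem_Ico]
      omega
    rw [hfil, Nat.card_Ico, hKval]
    rw [Nat.cast_sub hij.le]
  -- difference of the two sums
  have hdiff : (∑ i : Fin n, if (i : ℝ) / n ∈ Set.Ico I.1 I.2 then y i - θf else 0)
      - (∑ i : Fin n, if (i : ℝ) / n ∈ Set.Ico I.1 I.2 then y i - θg else 0)
      = K * (θg - θf) := by
    rw [← Finset.sum_sub_distrib]
    have : ∀ i : Fin n, ((if (i : ℝ) / n ∈ Set.Ico I.1 I.2 then y i - θf else 0)
        - (if (i : ℝ) / n ∈ Set.Ico I.1 I.2 then y i - θg else 0))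
        = (if (i : ℝ) / n ∈ Set.Ico I.1 I.2 then (1:ℝ) else 0) * (θg - θf) := by
      intro i
      split_ifs with h <;> ring
    rw [Finset.sum_congr rfl (fun i _ => this i), ← Finset.sum_mul, hcount]
  -- combine
  have hmain : K * |θf - θg| ≤ 2 * (Real.sqrt K * ((a + δ) * Real.sqrt L)) := by
    have habs : K * |θf - θg| = |K * (θg - θf)| := by
      rw [abs_mul, abs_of_pos hKpos, abs_sub_comm]
    rw [habs, ← hdiff]
    calc |(∑ i : Fin n, if (i : ℝ) / n ∈ Set.Ico I.1 I.2 then y i - θf else 0)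
        - (∑ i : Fin n, if (i : ℝ) / n ∈ Set.Ico I.1 I.2 then y i - θg else 0)|
        ≤ |∑ i : Fin n, if (i : ℝ) / n ∈ Set.Ico I.1 I.2 then y i - θf else 0|
          + |∑ i : Fin n, if (i : ℝ) / n ∈ Set.Ico I.1 I.2 then y i - θg else 0| :=
          abs_sub _ _
      _ ≤ 2 * (Real.sqrt K * ((a + δ) * Real.sqrt L)) := by linarith
  have hKsq : Real.sqrt K * Real.sqrt K = K := Real.mul_self_sqrt hKpos.le
  have hstep : |θf - θg| ≤ 2 * (a + δ) * (Real.sqrt L / Real.sqrt K) := by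
    rw [← mul_le_mul_iff_right₀ hKpos]
    calc K * |θf - θg| ≤ 2 * (Real.sqrt K * ((a + δ) * Real.sqrt L)) := hmain
      _ = K * (2 * (a + δ) * (Real.sqrt L / Real.sqrt K)) := by
          rw [← hKsq]
          generalize Real.sqrt K = r at hsqrtK ⊢
          field_simp
          rw [Real.sqrt_sq hsqrtK.le]
  have hsqdiv : Real.sqrt L / Real.sqrt K = Real.sqrt (L / K) :=
    (Real.sqrt_div hL0 K).symm
  rw [hsqdiv] at hstep
  refine le_trans hstep ?_
  have hnba : 0 < (n : ℝ) * (β - α) := by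
    have : 0 < β - α := by linarith
    positivity
  have hba : β - α ≤ (I.2 - I.1) * c := (div_le_iff₀ hc0).1 hIlen
  have hKge : (n : ℝ) * (β - α) / c ≤ K := by
    rw [div_le_iff₀ hc0, hKdef]
    calc (n:ℝ) * (β - α) ≤ (n:ℝ) * ((I.2 - I.1) * c) :=
          mul_le_mul_of_nonneg_left hba hn0.le
      _ = (n:ℝ) * (I.2 - I.1) * c := by ring
  have hdivle : L / K ≤ c * L / ((n : ℝ) * (β - α)) := by
    have h1 : 0 < (n : ℝ) * (β - α) / c := div_pos hnba hc0
    calc L / K ≤ L / ((n : ℝ) * (β - α) / c) :=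
          div_le_div_of_nonneg_left hL0 h1 hKge
      _ = c * L / ((n : ℝ) * (β - α)) := by field_simp
  have h2aδ : 0 ≤ 2 * (a + δ) := by linarith
  exact mul_le_mul_of_nonneg_left (Real.sqrt_le_sqrt hdivle) h2aδ
end
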